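/- Renormalization-group invariance of the supersymmetric partition function. Let V be a finite-dimensional complex inner product space with ℤ/2-grading given by a self-adjoint linear involution ε (even part V⁺ = ker(ε − id), odd part V⁻ = ker(ε + id)), and let Q : V → V be an odd self-adjoint operator. Then for every real t and every μ > 0, sTr(exp(−μ²t·Q²)) = sTr(exp(−t·Q²)); that is, the partition function Z(t) = sTr(e^{−tQ²}) is invariant under the renormalization group flow t ↦ μ²t. -/

import Mathlib

open NormedSpace

lemma clm_coe_pow {V : Type*} [NormedAddCommGroup V] [InnerProductSpace ℂ V]
    (A : V →L[ℂ] V) (n : ℕ) : (A ^ n).toLinearMap = A.toLinearMap ^ n := by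
  induction n with
  | zero => rfl
  | succ k ih => rw [pow_succ, pow_succ, ← ih]; rfl

/-- The supertrace of `ε * Q^(m+1)` vanishes when `Q` anticommutes with `ε`. -/
lemma str_pow_zero
    {V : Type*} [NormedAddCommGroup V] [InnerProductSpace ℂ V] [FiniteDimensional ℂ V]
    (ε Q : V →L[ℂ] V) (hodd : Q * ε = -(ε * Q)) (m : ℕ) :
    LinearMap.trace ℂ V ((ε * Q ^ (m + 1)).toLinearMap) = 0 := by
  set a : V →ₗ[ℂ] V := ε.toLinearMap
  set q : V →ₗ[ℂ] V := Q.toLinearMap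
  have hqa : q * a = -(a * q) := by
    have := congrArg ContinuousLinearMap.toLinearMap hodd
    simpa [a, q] using this
  have hcoe : (ε * Q ^ (m + 1)).toLinearMap = a * q ^ (m + 1) := by
    show (ε.toLinearMap * (Q ^ (m + 1)).toLinearMap) = _
    rw [clm_coe_pow]
  rw [hcoe]
  have h1 : a * q ^ (m + 1) = (a * q) * q ^ m := by
    rw [pow_succ', ← mul_assoc]
  have h2 : LinearMap.trace ℂ V (a * q ^ (m + 1))
      = -(LinearMap.trace ℂ V (a * q ^ (m + 1))) := by
    calc LinearMap.trace ℂ V (a * q ^ (m + 1))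
        = LinearMap.trace ℂ V ((a * q) * q ^ m) := by rw [h1]
      _ = LinearMap.trace ℂ V (q ^ m * (a * q)) := LinearMap.trace_mul_comm ℂ (a * q) (q ^ m)
      _ = LinearMap.trace ℂ V (q ^ m * -(q * a)) := by rw [hqa, neg_neg]
      _ = -(LinearMap.trace ℂ V (a * q ^ (m + 1))) := by
          rw [show q ^ m * -(q * a) = -((q ^ m * q) * a) by rw [mul_neg, mul_assoc], ← pow_succ]
          rw [map_neg]
          rw [LinearMap.trace_mul_comm]
  have h3 : LinearMap.trace ℂ V (a * q ^ (m + 1))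
      + LinearMap.trace ℂ V (a * q ^ (m + 1)) = 0 := by linear_combination h2
  exact add_self_eq_zero.mp h3

lemma str_exp_const
    {V : Type*} [NormedAddCommGroup V] [InnerProductSpace ℂ V] [FiniteDimensional ℂ V]
    (ε Q : V →L[ℂ] V) (hodd : Q * ε = -(ε * Q)) (c : ℂ) :
    LinearMap.trace ℂ V ((ε * NormedSpace.exp (c • Q ^ 2)).toLinearMap)
      = LinearMap.trace ℂ V ε.toLinearMap := by
  let g : (V →L[ℂ] V) →ₗ[ℂ] ℂ :=
    { toFun := fun A => LinearMap.trace ℂ V ((ε * A).toLinearMap)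
      map_add' := by intro A B; simp [mul_add]
      map_smul' := by intro r A; simp [mul_smul_comm] }
  let G : (V →L[ℂ] V) →L[ℂ] ℂ := LinearMap.toContinuousLinearMap g
  have hG : ∀ A : V →L[ℂ] V, G A = LinearMap.trace ℂ V ((ε * A).toLinearMap) := fun A => rfl
  have hsum : Summable fun n : ℕ => (((n.factorial : ℕ) : ℂ)⁻¹) • (c • Q ^ 2) ^ n :=
    NormedSpace.expSeries_summable' (𝕂 := ℂ) (c • Q ^ 2)
  calc LinearMap.trace ℂ V ((ε * NormedSpace.exp (c • Q ^ 2)).toLinearMap)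
      = G (NormedSpace.exp (c • Q ^ 2)) := (hG _).symm
    _ = G (∑' n : ℕ, (((n.factorial : ℕ) : ℂ)⁻¹) • (c • Q ^ 2) ^ n) := by rw [NormedSpace.exp_eq_tsum (𝕂 := ℂ)]
    _ = ∑' n : ℕ, G ((((n.factorial : ℕ) : ℂ)⁻¹) • (c • Q ^ 2) ^ n) := G.map_tsum hsum
    _ = G ((((Nat.factorial 0 : ℕ) : ℂ)⁻¹) • (c • Q ^ 2) ^ 0) := by
        apply tsum_eq_single
        intro n hn
        obtain ⟨m, rfl⟩ := Nat.exists_eq_succ_of_ne_zero hn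
        rw [hG]
        have : (c • Q ^ 2) ^ (m + 1) = c ^ (m + 1) • (Q ^ 2) ^ (m + 1) := smul_pow c (Q ^ 2) (m + 1)
        rw [this, smul_smul, mul_smul_comm, ← pow_mul]
        rw [ContinuousLinearMap.coe_smul, map_smul]
        have h0 : LinearMap.trace ℂ V ((ε * Q ^ (2 * (m + 1))).toLinearMap) = 0 := by
          have : 2 * (m + 1) = (2 * m + 1) + 1 := by ring
          rw [this]
          exact str_pow_zero ε Q hodd (2 * m + 1)
        rw [h0, smul_zero]
    _ = LinearMap.trace ℂ V ε.toLinearMap := by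
        rw [hG]; simp

/-- **Renormalization-group invariance of the supersymmetric partition function.**
Let `V` be a finite-dimensional complex inner product space with `ℤ/2`-grading given by a
self-adjoint linear involution `ε`, and let `Q` be an odd self-adjoint operator. Then for every
real `t` and every `μ > 0`, `sTr (exp (−μ²t·Q²)) = sTr (exp (−t·Q²))`. -/
theorem rg_invariance_partition_function
    {V : Type*} [NormedAddCommGroup V] [InnerProductSpace ℂ V] [FiniteDimensional ℂ V]
    (ε Q : V →L[ℂ] V)
    (hε_sa : IsSelfAdjoint ε) (hε2 : ε * ε = 1)
    (hQ_sa : IsSelfAdjoint Q) (hodd : Q * ε = -(ε * Q))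
    (t : ℝ) (μ : ℝ) (hμ : 0 < μ) :
    LinearMap.trace ℂ V ((ε * NormedSpace.exp ((-((μ ^ 2 * t : ℝ) : ℂ)) • Q ^ 2)).toLinearMap)
      = LinearMap.trace ℂ V ((ε * NormedSpace.exp ((-(t : ℂ)) • Q ^ 2)).toLinearMap) := by
  rw [str_exp_const ε Q hodd, str_exp_const ε Q hodd]
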